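/- In the Ariki-Koike algebra H_{n,r}(q), for every color word c = (c_1,…,c_n) ∈ {1,…,r}^n and every 1 ≤ i ≤ n-1, one has: T_i L_c = L_{c s_i} T_i + (q-1) L_c if c_i < c_{i+1}; T_i L_c = L_c T_i if c_i = c_{i+1}; and T_i L_c = L_{c s_i} T_i - (q-1) L_{c s_i} if c_i > c_{i+1}; where c s_i is obtained from c by exchanging c_i and c_{i+1}. -/

import Mathlib

/-!
STATEMENT 7: In the Ariki-Koike algebra `H_{n,r}(q)`, for every color word
`c = (c_1,…,c_n) ∈ {1,…,r}^n` and every `1 ≤ i ≤ n-1` (here 0-indexed positions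
`j, j+1` with `j+1 < n`), one has:
* `T_i L_c = L_{c s_i} T_i + (q-1) L_c` if `c_i < c_{i+1}`;
* `T_i L_c = L_c T_i` if `c_i = c_{i+1}`;
* `T_i L_c = L_{c s_i} T_i - (q-1) L_{c s_i}` if `c_i > c_{i+1}`;
where `c s_i` is obtained from `c` by exchanging `c_i` and `c_{i+1}`.
-/

namespace AKSPaper

noncomputable section

open Polynomial

/-- The Lagrange interpolation polynomial `P_k(X) = ∏_{l ≠ k} (X - u_l)/(u_k - u_l)`. -/
def Lag {r : ℕ} (u : Fin r → ℂ) (k : Fin r) : ℂ[X] :=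
  ∏ l ∈ Finset.univ.erase k, (Polynomial.C ((u k - u l)⁻¹) * (X - Polynomial.C (u l)))

/-- The free algebra on the generators `T_1, …, T_{n-1}` (indexed by `Fin (n-1)`) and
`ξ_1, …, ξ_n` (indexed by `Fin n`). -/
abbrev FA (n : ℕ) := FreeAlgebra ℂ (Fin (n - 1) ⊕ Fin n)

/-- The generator `T_{i+1}` in the free algebra. -/
def Tf {n : ℕ} (i : Fin (n - 1)) : FA n := FreeAlgebra.ι ℂ (Sum.inl i)

/-- The generator `ξ_{j+1}` in the free algebra. -/
def Xf {n : ℕ} (j : Fin n) : FA n := FreeAlgebra.ι ℂ (Sum.inr j)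

/-- For the T-generator of index `i`, the position of `ξ_i` (0-indexed). -/
def loIdx {n : ℕ} (i : Fin (n - 1)) : Fin n := ⟨i.1, by have := i.isLt; omega⟩

/-- For the T-generator of index `i`, the position of `ξ_{i+1}` (0-indexed). -/
def hiIdx {n : ℕ} (i : Fin (n - 1)) : Fin n := ⟨i.1 + 1, by have := i.isLt; omega⟩

/-- The defining relations of the Ariki-Koike algebra `H_{n,r}(q)` in Shoji's
normalized presentation, with parameters `u_1, …, u_r`. -/
inductive AKRel (n r : ℕ) (q : ℂ) (u : Fin r → ℂ) : FA n → FA n → Prop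
  | quad (i : Fin (n - 1)) :
      AKRel n r q u ((Tf i - algebraMap ℂ (FA n) q) * (Tf i + 1)) 0
  | braid (i j : Fin (n - 1)) (h : (i : ℕ) + 1 = j) :
      AKRel n r q u (Tf i * Tf j * Tf i) (Tf j * Tf i * Tf j)
  | commT (i j : Fin (n - 1)) (h : (i : ℕ) + 2 ≤ j ∨ (j : ℕ) + 2 ≤ i) :
      AKRel n r q u (Tf i * Tf j) (Tf j * Tf i)
  | xiAnn (j : Fin n) :
      AKRel n r q u
        (Polynomial.aeval (Xf j) (∏ l : Fin r, (X - Polynomial.C (u l)))) 0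
  | xiComm (i j : Fin n) : AKRel n r q u (Xf i * Xf j) (Xf j * Xf i)
  | cross (i : Fin (n - 1)) :
      AKRel n r q u (Tf i * Xf (loIdx i))
        (Xf (hiIdx i) * Tf i - (q - 1) •
          ∑ p ∈ Finset.univ.filter (fun p : Fin r × Fin r => p.1 < p.2),
            (u p.2 - u p.1) •
              (Polynomial.aeval (Xf (loIdx i)) (Lag u p.1) *
                Polynomial.aeval (Xf (hiIdx i)) (Lag u p.2)))
  | sumComm (i : Fin (n - 1)) :
      AKRel n r q u (Tf i * (Xf (hiIdx i) + Xf (loIdx i)))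
        ((Xf (hiIdx i) + Xf (loIdx i)) * Tf i)
  | farComm (i : Fin (n - 1)) (j : Fin n) (h : (j : ℕ) ≠ i ∧ (j : ℕ) ≠ (i : ℕ) + 1) :
      AKRel n r q u (Tf i * Xf j) (Xf j * Tf i)

/-- The Ariki-Koike algebra `H_{n,r}(q)` (for `q = 0`, the 0-Ariki-Koike-Shoji
algebra). -/
abbrev AK (n r : ℕ) (q : ℂ) (u : Fin r → ℂ) := RingQuot (AKRel n r q u)

/-- The generator `T_{i+1}` of `H_{n,r}(q)`. -/
def Tg {n r : ℕ} {q : ℂ} {u : Fin r → ℂ} (i : Fin (n - 1)) : AK n r q u :=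
  RingQuot.mkAlgHom ℂ (AKRel n r q u) (Tf i)

/-- The generator `T` of `H_{n,r}(q)` acting on 0-indexed positions `j, j+1`. -/
def TgPos {n r : ℕ} {q : ℂ} {u : Fin r → ℂ} (j : ℕ) (h : j + 1 < n) : AK n r q u :=
  Tg ⟨j, by omega⟩

/-- The generator `ξ_{j+1}` of `H_{n,r}(q)`. -/
def Xg {n r : ℕ} {q : ℂ} {u : Fin r → ℂ} (j : Fin n) : AK n r q u :=
  RingQuot.mkAlgHom ℂ (AKRel n r q u) (Xf j)

/-- The Lagrange idempotent `L_c = P_{c_1}(ξ_1) ⋯ P_{c_n}(ξ_n)`. -/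
def L {n r : ℕ} {q : ℂ} {u : Fin r → ℂ} (c : Fin n → Fin r) : AK n r q u :=
  (List.ofFn fun j : Fin n =>
    Polynomial.aeval (Xg (q := q) (u := u) j) (Lag u (c j))).prod

/-- The elementary transposition exchanging the 0-indexed positions `j`, `j+1`. -/
def sw {n : ℕ} (j : ℕ) (h : j + 1 < n) : Equiv.Perm (Fin n) :=
  Equiv.swap ⟨j, by omega⟩ ⟨j + 1, h⟩

/-- The number of inversions of a permutation. -/
def invnum {n : ℕ} (σ : Equiv.Perm (Fin n)) : ℕ :=
  (Finset.univ.filter fun p : Fin n × Fin n => p.1 < p.2 ∧ σ p.2 < σ p.1).card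

/-- `Tw` is the family `σ ↦ T_σ` (product of the `T_i` along any reduced word). -/
def IsTFam {n r : ℕ} {q : ℂ} {u : Fin r → ℂ}
    (Tw : Equiv.Perm (Fin n) → AK n r q u) : Prop :=
  Tw 1 = 1 ∧ ∀ (j : ℕ) (h : j + 1 < n) (τ : Equiv.Perm (Fin n)),
    invnum (sw j h * τ) = invnum τ + 1 → Tw (sw j h * τ) = TgPos j h * Tw τ

/-- `i` (0-indexed, `i+1 < n`) is a descent of the permutation `σ`. -/
def descPerm {n : ℕ} (σ : Equiv.Perm (Fin n)) (i : ℕ) : Prop :=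
  ∃ h : i + 1 < n, σ ⟨i + 1, h⟩ < σ ⟨i, by omega⟩

/-- `i` (0-indexed) is a descent of the composition `I` of `n`. -/
def descComp {n : ℕ} (I : Composition n) (i : ℕ) : Prop :=
  i + 1 < n ∧ ∃ k ∈ Finset.range (n + 1), (I.blocks.take k).sum = i + 1

/-- `[I, c]` is a cycloribbon: weakly increasing along rows, weakly decreasing down
columns. -/
def IsCycloribbon {n r : ℕ} (I : Composition n) (c : Fin n → Fin r) : Prop :=
  ∀ (i : ℕ) (h : i + 1 < n),
    (descComp I i → c ⟨i + 1, h⟩ ≤ c ⟨i, by omega⟩) ∧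
    (¬ descComp I i → c ⟨i, by omega⟩ ≤ c ⟨i + 1, h⟩)

/-- `[I, c]` is an anticycloribbon: weakly decreasing along rows, weakly increasing
down columns. -/
def IsAnticycloribbon {n r : ℕ} (I : Composition n) (c : Fin n → Fin r) : Prop :=
  ∀ (i : ℕ) (h : i + 1 < n),
    (descComp I i → c ⟨i, by omega⟩ ≤ c ⟨i + 1, h⟩) ∧
    (¬ descComp I i → c ⟨i + 1, h⟩ ≤ c ⟨i, by omega⟩)

/-- `i` is a descent of the shape of the colored ribbon `φ([I,c])`. -/
def descPhi {n r : ℕ} (I : Composition n) (c : Fin n → Fin r) (i : ℕ) : Prop :=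
  ∃ h : i + 1 < n,
    (descComp I i ∧ c ⟨i + 1, h⟩ = c ⟨i, by omega⟩) ∨
    (¬ descComp I i ∧ c ⟨i + 1, h⟩ ≠ c ⟨i, by omega⟩)


/-! ### Auxiliary lemmas -/

section Aux

variable {n r : ℕ} {q : ℂ} {u : Fin r → ℂ}

lemma lag_eval (hu : Function.Injective u) (a b : Fin r) :
    (Lag u a).eval (u b) = if b = a then 1 else 0 := by
  rw [Lag, eval_prod]
  rcases eq_or_ne b a with rfl | hba
  · rw [if_pos rfl]
    refine Finset.prod_eq_one fun l hl => ?_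
    have hl' : l ≠ b := (Finset.mem_erase.mp hl).1
    have hne : u b - u l ≠ 0 := sub_ne_zero.mpr fun e => hl' (hu e).symm
    simp [inv_mul_cancel₀ hne]
  · rw [if_neg hba]
    refine Finset.prod_eq_zero (Finset.mem_erase.mpr ⟨hba, Finset.mem_univ b⟩) ?_
    simp

lemma dvd_of_roots (hu : Function.Injective u) {f : ℂ[X]}
    (hf : ∀ l, f.eval (u l) = 0) : (∏ l : Fin r, (X - C (u l))) ∣ f :=
  Finset.prod_dvd_of_coprime
    ((Polynomial.pairwise_coprime_X_sub_C hu).set_pairwise _)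
    (fun l _ => dvd_iff_isRoot.mpr (hf l))

lemma commute_aeval {A : Type*} [Semiring A] [Algebra ℂ A] {z y : A}
    (hc : Commute z y) (p : ℂ[X]) : Commute z (Polynomial.aeval y p) := by
  induction p using Polynomial.induction_on' with
  | add p q hp hq => rw [map_add]; exact hp.add_right hq
  | monomial k c =>
      rw [aeval_monomial]
      exact Commute.mul_right ((Algebra.commutes c z).symm) (hc.pow_right k)

/-- The idempotent `P_a(ξ_k)` in the Ariki-Koike algebra. -/
def eL (q : ℂ) (u : Fin r → ℂ) (k : Fin n) (a : Fin r) : AK n r q u :=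
  Polynomial.aeval (Xg k) (Lag u a)

lemma Xg_commute (k m : Fin n) :
    Commute (Xg (n := n) (r := r) (q := q) (u := u) k) (Xg m) := by
  have w := RingQuot.mkAlgHom_rel ℂ (AKRel.xiComm (n := n) (r := r) (q := q) (u := u) k m)
  simp only [map_mul] at w
  exact w

lemma Xg_e_comm (k m : Fin n) (a : Fin r) :
    Xg (n := n) (r := r) (q := q) (u := u) k * eL q u m a = eL q u m a * Xg k :=
  (commute_aeval (Xg_commute k m) _).eq

lemma e_commute (k m : Fin n) (a b : Fin r) :
    Commute (eL (n := n) q u k a) (eL q u m b) :=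
  (commute_aeval ((commute_aeval (Xg_commute k m) (Lag u b)).symm) (Lag u a)).symm

lemma aeval_dvd_zero (k : Fin n) {f : ℂ[X]} (hf : (∏ l : Fin r, (X - C (u l))) ∣ f) :
    Polynomial.aeval (Xg (n := n) (r := r) (q := q) (u := u) k) f = 0 := by
  obtain ⟨g, rfl⟩ := hf
  rw [map_mul]
  have w : Polynomial.aeval (Xg (n := n) (r := r) (q := q) (u := u) k)
      (∏ l : Fin r, (X - C (u l))) = 0 := by
    simp only [Xg]
    rw [Polynomial.aeval_algHom_apply, RingQuot.mkAlgHom_rel ℂ (AKRel.xiAnn k), map_zero]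
  rw [w, zero_mul]

lemma e_orth (hu : Function.Injective u) (k : Fin n) (a b : Fin r) :
    eL (n := n) q u k a * eL q u k b = if a = b then eL q u k a else 0 := by
  simp only [eL, ← map_mul]
  rcases eq_or_ne a b with rfl | hab
  · rw [if_pos rfl]
    have h0 : Polynomial.aeval (Xg (n := n) (r := r) (q := q) (u := u) k)
        (Lag u a * Lag u a - Lag u a) = 0 :=
      aeval_dvd_zero k (dvd_of_roots hu fun l => by
        simp only [eval_sub, eval_mul, lag_eval hu]
        by_cases hla : l = a <;> simp [hla])
    rw [map_sub] at h0
    exact sub_eq_zero.mp h0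
  · rw [if_neg hab]
    exact aeval_dvd_zero k (dvd_of_roots hu fun l => by
      simp only [eval_mul, lag_eval hu]
      by_cases hla : l = a
      · subst hla; simp [hab]
      · simp [hla])

lemma e_sum (hu : Function.Injective u) (k : Fin n) :
    ∑ a : Fin r, eL (n := n) q u k a = 1 := by
  have h0 : Polynomial.aeval (Xg (n := n) (r := r) (q := q) (u := u) k)
      ((∑ a : Fin r, Lag u a) - 1) = 0 :=
    aeval_dvd_zero k (dvd_of_roots hu fun l => by
      simp [eval_finset_sum, lag_eval hu])
  rw [map_sub, map_sum, map_one, sub_eq_zero] at h0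
  simpa [eL] using h0

lemma Xg_mul_e (hu : Function.Injective u) (k : Fin n) (a : Fin r) :
    Xg (n := n) (r := r) (q := q) (u := u) k * eL q u k a = u a • eL q u k a := by
  have h0 : Polynomial.aeval (Xg (n := n) (r := r) (q := q) (u := u) k)
      (X * Lag u a - C (u a) * Lag u a) = 0 :=
    aeval_dvd_zero k (dvd_of_roots hu fun l => by
      simp only [eval_sub, eval_mul, eval_X, eval_C, lag_eval hu]
      by_cases hla : l = a <;> simp [hla])
  rw [map_sub, map_mul, map_mul, aeval_X, aeval_C, sub_eq_zero] at h0
  rw [eL, h0, ← Algebra.smul_def]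

lemma e_mul_Xg (hu : Function.Injective u) (k : Fin n) (a : Fin r) :
    eL (n := n) q u k a * Xg k = u a • eL q u k a := by
  rw [← Xg_mul_e hu k a]
  exact (commute_aeval (Commute.refl (Xg k)) (Lag u a)).symm.eq

lemma Tg_X_comm (i : Fin (n - 1)) (k : Fin n) (h1 : (k : ℕ) ≠ i)
    (h2 : (k : ℕ) ≠ (i : ℕ) + 1) :
    Commute (Tg (n := n) (r := r) (q := q) (u := u) i) (Xg k) := by
  have w := RingQuot.mkAlgHom_rel ℂ
    (AKRel.farComm (n := n) (r := r) (q := q) (u := u) i k ⟨h1, h2⟩)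
  simp only [map_mul] at w
  exact w

lemma Tg_e_comm (i : Fin (n - 1)) (k : Fin n) (h1 : (k : ℕ) ≠ i)
    (h2 : (k : ℕ) ≠ (i : ℕ) + 1) (a : Fin r) :
    Commute (Tg (n := n) (r := r) (q := q) (u := u) i) (eL q u k a) :=
  commute_aeval (Tg_X_comm i k h1 h2) _

/-- The idempotent `E_{ab} = P_a(ξ_i) P_b(ξ_{i+1})`. -/
def EE (q : ℂ) (u : Fin r → ℂ) (i : Fin (n - 1)) (a b : Fin r) : AK n r q u :=
  eL q u (loIdx i) a * eL q u (hiIdx i) b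

/-- The sum appearing in the cross relation. -/
def SS (q : ℂ) (u : Fin r → ℂ) (i : Fin (n - 1)) : AK n r q u :=
  ∑ p ∈ Finset.univ.filter (fun p : Fin r × Fin r => p.1 < p.2),
    (u p.2 - u p.1) • EE q u i p.1 p.2

lemma crossAK (i : Fin (n - 1)) :
    Tg (n := n) (r := r) (q := q) (u := u) i * Xg (loIdx i) =
      Xg (hiIdx i) * Tg i - (q - 1) • SS q u i := by
  have w := RingQuot.mkAlgHom_rel ℂ (AKRel.cross (n := n) (r := r) (q := q) (u := u) i)
  simp only [map_mul, map_sub, map_smul, map_sum, ← Polynomial.aeval_algHom_apply] at w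
  simpa only [SS, EE, eL, Tg, Xg] using w

lemma crossAK2 (i : Fin (n - 1)) :
    Tg (n := n) (r := r) (q := q) (u := u) i * Xg (hiIdx i) =
      Xg (loIdx i) * Tg i + (q - 1) • SS q u i := by
  have w := RingQuot.mkAlgHom_rel ℂ (AKRel.sumComm (n := n) (r := r) (q := q) (u := u) i)
  simp only [map_mul, map_add] at w
  have w' : Tg (n := n) (r := r) (q := q) (u := u) i * (Xg (hiIdx i) + Xg (loIdx i)) =
      (Xg (hiIdx i) + Xg (loIdx i)) * Tg i := by
    simpa only [Tg, Xg] using w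
  rw [mul_add, add_mul, crossAK] at w'
  rw [← sub_eq_zero] at w' ⊢
  have hre : Tg (n := n) (r := r) (q := q) (u := u) i * Xg (hiIdx i) -
      (Xg (loIdx i) * Tg i + (q - 1) • SS q u i)
      = Tg i * Xg (hiIdx i) + (Xg (hiIdx i) * Tg i - (q - 1) • SS q u i) -
        (Xg (hiIdx i) * Tg i + Xg (loIdx i) * Tg i) := by abel
  rw [hre, w']

lemma EE_mul (hu : Function.Injective u) (i : Fin (n - 1)) (a b c d : Fin r) :
    EE (n := n) q u i a b * EE q u i c d = if a = c ∧ b = d then EE q u i a b else 0 := by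
  simp only [EE]
  rw [mul_assoc, ← mul_assoc (eL q u (hiIdx i) b), (e_commute (hiIdx i) (loIdx i) b c).eq,
    mul_assoc, ← mul_assoc, e_orth hu, e_orth hu]
  by_cases hac : a = c <;> by_cases hbd : b = d <;> simp [hac, hbd]

lemma EE_sum (hu : Function.Injective u) (i : Fin (n - 1)) :
    ∑ p : Fin r × Fin r, EE (n := n) q u i p.1 p.2 = 1 := by
  rw [Fintype.sum_prod_type]
  simp only [EE, ← Finset.mul_sum]
  rw [← Finset.sum_mul, e_sum hu, e_sum hu, one_mul]

lemma Xlo_EE (hu : Function.Injective u) (i : Fin (n - 1)) (a b : Fin r) :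
    Xg (loIdx i) * EE (n := n) q u i a b = u a • EE q u i a b := by
  simp only [EE]
  rw [← mul_assoc, Xg_mul_e hu, smul_mul_assoc]

lemma Xhi_EE (hu : Function.Injective u) (i : Fin (n - 1)) (a b : Fin r) :
    Xg (hiIdx i) * EE (n := n) q u i a b = u b • EE q u i a b := by
  simp only [EE]
  rw [← mul_assoc, Xg_e_comm, mul_assoc, Xg_mul_e hu, mul_smul_comm]

lemma EE_Xlo (hu : Function.Injective u) (i : Fin (n - 1)) (a b : Fin r) :
    EE (n := n) q u i a b * Xg (loIdx i) = u a • EE q u i a b := by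
  simp only [EE]
  rw [mul_assoc, ← Xg_e_comm, ← mul_assoc, e_mul_Xg hu, smul_mul_assoc]

lemma EE_Xhi (hu : Function.Injective u) (i : Fin (n - 1)) (a b : Fin r) :
    EE (n := n) q u i a b * Xg (hiIdx i) = u b • EE q u i a b := by
  simp only [EE]
  rw [mul_assoc, e_mul_Xg hu, mul_smul_comm]

lemma ESE (hu : Function.Injective u) (i : Fin (n - 1)) (a b c d : Fin r) :
    EE (n := n) q u i c d * (SS q u i * EE q u i a b) =
      if c = a ∧ d = b ∧ a < b then (u b - u a) • EE q u i a b else 0 := by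
  rw [SS, Finset.sum_mul, Finset.mul_sum]
  simp only [smul_mul_assoc, mul_smul_comm, EE_mul hu, mul_ite, mul_zero, smul_ite, smul_zero]
  by_cases hab : a < b
  · rw [Finset.sum_eq_single_of_mem (a, b)
      (Finset.mem_filter.mpr ⟨Finset.mem_univ _, hab⟩)
      (fun p hp hpne => by
        rw [if_neg]
        rintro ⟨h1, h2⟩
        exact hpne (Prod.ext_iff.mpr ⟨h1, h2⟩))]
    rw [if_pos ⟨rfl, rfl⟩]
    simp only [hab, and_true]
    split_ifs with h0
    · rw [h0.1, h0.2]
    · rfl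
  · rw [if_neg (fun hx => hab hx.2.2)]
    refine Finset.sum_eq_zero fun p hp => ?_
    rw [if_neg]
    rintro ⟨h1, h2⟩
    exact hab (h1 ▸ h2 ▸ (Finset.mem_filter.mp hp).2)

lemma smul_cancel {z : ℂ} (hz : z ≠ 0) {x y : AK n r q u} (hxy : z • x = z • y) :
    x = y := by
  have h2 := congrArg (fun w => z⁻¹ • w) hxy
  simpa [smul_smul, inv_mul_cancel₀ hz] using h2

lemma classify (hu : Function.Injective u) (i : Fin (n - 1)) (a b c d : Fin r)
    (hne : (c, d) ≠ (b, a)) :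
    EE (n := n) q u i c d * (Tg i * EE q u i a b) =
      if c = a ∧ d = b ∧ a < b then (q - 1) • EE q u i a b else 0 := by
  have s1 : u a • (EE (n := n) q u i c d * (Tg i * EE q u i a b)) =
      u d • (EE q u i c d * (Tg i * EE q u i a b)) -
        (q - 1) • (EE q u i c d * (SS q u i * EE q u i a b)) := by
    have e1 : EE (n := n) q u i c d * (Tg i * (Xg (loIdx i) * EE q u i a b)) =
        u a • (EE q u i c d * (Tg i * EE q u i a b)) := by
      rw [Xlo_EE hu, mul_smul_comm, mul_smul_comm]
    rw [← e1]
    calc EE (n := n) q u i c d * (Tg i * (Xg (loIdx i) * EE q u i a b))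
        = EE q u i c d * ((Tg i * Xg (loIdx i)) * EE q u i a b) := by
          rw [mul_assoc]
      _ = EE q u i c d * ((Xg (hiIdx i) * Tg i - (q - 1) • SS q u i) * EE q u i a b) := by
          rw [crossAK]
      _ = EE q u i c d * (Xg (hiIdx i) * (Tg i * EE q u i a b)) -
            (q - 1) • (EE q u i c d * (SS q u i * EE q u i a b)) := by
          rw [sub_mul, smul_mul_assoc, mul_sub, mul_smul_comm, mul_assoc]
      _ = u d • (EE q u i c d * (Tg i * EE q u i a b)) -
            (q - 1) • (EE q u i c d * (SS q u i * EE q u i a b)) := by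
          rw [← mul_assoc, EE_Xhi hu, smul_mul_assoc]
  have s2 : u b • (EE (n := n) q u i c d * (Tg i * EE q u i a b)) =
      u c • (EE q u i c d * (Tg i * EE q u i a b)) +
        (q - 1) • (EE q u i c d * (SS q u i * EE q u i a b)) := by
    have e1 : EE (n := n) q u i c d * (Tg i * (Xg (hiIdx i) * EE q u i a b)) =
        u b • (EE q u i c d * (Tg i * EE q u i a b)) := by
      rw [Xhi_EE hu, mul_smul_comm, mul_smul_comm]
    rw [← e1]
    calc EE (n := n) q u i c d * (Tg i * (Xg (hiIdx i) * EE q u i a b))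
        = EE q u i c d * ((Tg i * Xg (hiIdx i)) * EE q u i a b) := by
          rw [mul_assoc]
      _ = EE q u i c d * ((Xg (loIdx i) * Tg i + (q - 1) • SS q u i) * EE q u i a b) := by
          rw [crossAK2]
      _ = EE q u i c d * (Xg (loIdx i) * (Tg i * EE q u i a b)) +
            (q - 1) • (EE q u i c d * (SS q u i * EE q u i a b)) := by
          rw [add_mul, smul_mul_assoc, mul_add, mul_smul_comm, mul_assoc]
      _ = u c • (EE q u i c d * (Tg i * EE q u i a b)) +
            (q - 1) • (EE q u i c d * (SS q u i * EE q u i a b)) := by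
          rw [← mul_assoc, EE_Xlo hu, smul_mul_assoc]
  rw [ESE hu] at s1 s2
  by_cases hc : c = a ∧ d = b ∧ a < b
  · rw [if_pos hc] at s1 ⊢
    obtain ⟨hca, hdb, hab⟩ := hc
    subst hca
    subst hdb
    apply smul_cancel (sub_ne_zero.mpr fun e => (ne_of_lt hab) (hu e) : u c - u d ≠ 0)
    have hsplit : (u c - u d) • (EE (n := n) q u i c d * (Tg i * EE q u i c d)) =
        u c • (EE q u i c d * (Tg i * EE q u i c d)) -
          u d • (EE q u i c d * (Tg i * EE q u i c d)) := by module
    rw [hsplit, s1]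
    module
  · rw [if_neg hc] at s1 s2 ⊢
    rw [smul_zero, sub_zero] at s1
    rw [smul_zero, add_zero] at s2
    by_cases had : a = d
    · have hbc : b ≠ c := fun e => hne (Prod.ext_iff.mpr ⟨e.symm, had.symm⟩)
      apply smul_cancel (sub_ne_zero.mpr fun e2 => hbc (hu e2) : u b - u c ≠ 0)
      have hsplit : (u b - u c) • (EE (n := n) q u i c d * (Tg i * EE q u i a b)) =
          u b • (EE q u i c d * (Tg i * EE q u i a b)) -
            u c • (EE q u i c d * (Tg i * EE q u i a b)) := by module
      rw [smul_zero, hsplit, s2, sub_self]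
    · apply smul_cancel (sub_ne_zero.mpr fun e2 => had (hu e2) : u a - u d ≠ 0)
      have hsplit : (u a - u d) • (EE (n := n) q u i c d * (Tg i * EE q u i a b)) =
          u a • (EE q u i c d * (Tg i * EE q u i a b)) -
            u d • (EE q u i c d * (Tg i * EE q u i a b)) := by module
      rw [smul_zero, hsplit, s1, sub_self]

lemma TE (hu : Function.Injective u) (i : Fin (n - 1)) (a b : Fin r) :
    Tg (n := n) (r := r) (q := q) (u := u) i * EE q u i a b =
      EE q u i b a * (Tg i * EE q u i a b) +
        (if a < b then (q - 1) • EE q u i a b else 0) := by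
  conv_lhs => rw [← one_mul (Tg (n := n) (r := r) (q := q) (u := u) i * EE q u i a b)]
  rw [← EE_sum hu i, Finset.sum_mul, ← Finset.add_sum_erase _ _ (Finset.mem_univ (b, a))]
  congr 1
  by_cases hab : a < b
  · rw [if_pos hab]
    rw [Finset.sum_eq_single_of_mem (a, b)
      (Finset.mem_erase.mpr ⟨fun e => absurd (Prod.ext_iff.mp e).1 (ne_of_lt hab),
        Finset.mem_univ _⟩)
      (fun p hp hpne => by
        rw [classify hu i a b p.1 p.2 (by simpa using (Finset.mem_erase.mp hp).1), if_neg]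
        rintro ⟨h1, h2, h3⟩
        exact hpne (Prod.ext_iff.mpr ⟨h1, h2⟩))]
    rw [classify hu i a b a b (fun e => absurd (Prod.ext_iff.mp e).1 (ne_of_lt hab)),
      if_pos ⟨rfl, rfl, hab⟩]
  · rw [if_neg hab]
    refine Finset.sum_eq_zero fun p hp => ?_
    rw [classify hu i a b p.1 p.2 (by simpa using (Finset.mem_erase.mp hp).1), if_neg]
    rintro ⟨h1, h2, h3⟩
    exact hab h3

lemma ET (hu : Function.Injective u) (i : Fin (n - 1)) (a b : Fin r) :
    EE (n := n) q u i b a * Tg i =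
      EE q u i b a * (Tg i * EE q u i a b) +
        (if b < a then (q - 1) • EE q u i b a else 0) := by
  conv_lhs => rw [← mul_one (EE (n := n) q u i b a * Tg i)]
  rw [← EE_sum hu i, Finset.mul_sum]
  simp only [mul_assoc]
  rw [← Finset.add_sum_erase _ _ (Finset.mem_univ (a, b))]
  congr 1
  by_cases hba : b < a
  · rw [if_pos hba]
    rw [Finset.sum_eq_single_of_mem (b, a)
      (Finset.mem_erase.mpr ⟨fun e => absurd (Prod.ext_iff.mp e).1 (ne_of_lt hba),
        Finset.mem_univ _⟩)
      (fun p hp hpne => by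
        rw [classify hu i p.1 p.2 b a
          (fun e => (Finset.mem_erase.mp hp).1
            (Prod.ext_iff.mpr ⟨(Prod.ext_iff.mp e).2.symm, (Prod.ext_iff.mp e).1.symm⟩)),
          if_neg]
        rintro ⟨h1, h2, h3⟩
        exact hpne (Prod.ext_iff.mpr ⟨h1.symm, h2.symm⟩))]
    rw [classify hu i b a b a
      (by intro e; rw [Prod.mk.injEq] at e; exact (ne_of_lt hba) e.1),
      if_pos ⟨rfl, rfl, hba⟩]
  · rw [if_neg hba]
    refine Finset.sum_eq_zero fun p hp => ?_
    rw [classify hu i p.1 p.2 b a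
      (fun e => (Finset.mem_erase.mp hp).1
        (Prod.ext_iff.mpr ⟨(Prod.ext_iff.mp e).2.symm, (Prod.ext_iff.mp e).1.symm⟩)),
      if_neg]
    rintro ⟨h1, h2, h3⟩
    exact hba (h1 ▸ h2 ▸ h3)

lemma TEfinal (hu : Function.Injective u) (i : Fin (n - 1)) (a b : Fin r) :
    Tg (n := n) (r := r) (q := q) (u := u) i * EE q u i a b =
      EE q u i b a * Tg i + (if a < b then (q - 1) • EE q u i a b else 0)
        - (if b < a then (q - 1) • EE q u i b a else 0) := by
  rw [TE hu i a b, ET hu i a b]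
  abel

lemma L_decomp (c : Fin n → Fin r) (j : ℕ) (h : j + 1 < n) :
    L (q := q) (u := u) c =
      ((List.ofFn fun k : Fin n => eL q u k (c k)).take j).prod *
        (EE q u ⟨j, by omega⟩ (c ⟨j, by omega⟩) (c ⟨j + 1, h⟩) *
          ((List.ofFn fun k : Fin n => eL q u k (c k)).drop (j + 2)).prod) := by
  have hlen : (List.ofFn fun k : Fin n => eL (n := n) q u k (c k)).length = n :=
    List.length_ofFn
  have h1 : j < (List.ofFn fun k : Fin n => eL (n := n) q u k (c k)).length := by
    rw [hlen]; omega
  have h2 : j + 1 < (List.ofFn fun k : Fin n => eL (n := n) q u k (c k)).length := by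
    rw [hlen]; omega
  show (List.ofFn fun k : Fin n => eL (n := n) q u k (c k)).prod = _
  conv_lhs => rw [← List.take_append_drop j (List.ofFn fun k : Fin n => eL q u k (c k))]
  rw [List.prod_append]
  congr 1
  rw [List.drop_eq_getElem_cons h1, List.drop_eq_getElem_cons h2,
    List.prod_cons, List.prod_cons, ← mul_assoc]
  congr 1
  rw [List.getElem_ofFn, List.getElem_ofFn]
  rfl

end Aux

theorem commutation_T_L (n r : ℕ) (q : ℂ) (u : Fin r → ℂ)
    (hu : Function.Injective u) (c : Fin n → Fin r) (j : ℕ) (h : j + 1 < n) :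
    (c ⟨j, by omega⟩ < c ⟨j + 1, h⟩ →
      TgPos (q := q) (u := u) j h * L c =
        L (c ∘ ⇑(sw j h)) * TgPos j h + (q - 1) • L c) ∧
    (c ⟨j, by omega⟩ = c ⟨j + 1, h⟩ →
      TgPos (q := q) (u := u) j h * L c = L c * TgPos j h) ∧
    (c ⟨j + 1, h⟩ < c ⟨j, by omega⟩ →
      TgPos (q := q) (u := u) j h * L c =
        L (c ∘ ⇑(sw j h)) * TgPos j h - (q - 1) • L (c ∘ ⇑(sw j h))) := by
  
  have hn1 : j < n - 1 := by omega
  have hjn : j < n := by omega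
  have hfix : ∀ (m : ℕ) (hm : m < n), m ≠ j → m ≠ j + 1 →
      (c ∘ ⇑(sw j h)) ⟨m, hm⟩ = c ⟨m, hm⟩ := by
    intro m hm hmj hmj1
    have hsfix : sw j h ⟨m, hm⟩ = ⟨m, hm⟩ := by
      simp only [sw]
      exact Equiv.swap_apply_of_ne_of_ne (Fin.ne_of_val_ne hmj) (Fin.ne_of_val_ne hmj1)
    simp only [Function.comp_apply, hsfix]
  have htake : (List.ofFn fun k : Fin n => eL (n := n) q u k ((c ∘ ⇑(sw j h)) k)).take j =
      (List.ofFn fun k : Fin n => eL (n := n) q u k (c k)).take j := by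
    apply List.ext_getElem (by simp)
    intro m h1 h2
    have hm : m < j ∧ m < n := by
      simp only [List.length_take, List.length_ofFn] at h1
      omega
    simp only [List.getElem_take, List.getElem_ofFn]
    rw [hfix m hm.2 (by omega) (by omega)]
  have hdrop : (List.ofFn fun k : Fin n => eL (n := n) q u k ((c ∘ ⇑(sw j h)) k)).drop (j + 2) =
      (List.ofFn fun k : Fin n => eL (n := n) q u k (c k)).drop (j + 2) := by
    apply List.ext_getElem (by simp)
    intro m h1 h2
    have hm : j + 2 + m < n := by
      simp only [List.length_drop, List.length_ofFn] at h1
      omega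
    simp only [List.getElem_drop, List.getElem_ofFn]
    rw [hfix (j + 2 + m) hm (by omega) (by omega)]
  have hLc := L_decomp (q := q) (u := u) c j h
  have hswlo : (c ∘ ⇑(sw j h)) ⟨j, hjn⟩ = c ⟨j + 1, h⟩ := by
    simp only [Function.comp_apply, sw]
    rw [Equiv.swap_apply_left]
  have hswhi : (c ∘ ⇑(sw j h)) ⟨j + 1, h⟩ = c ⟨j, hjn⟩ := by
    simp only [Function.comp_apply, sw]
    rw [Equiv.swap_apply_right]
  have hLc' : L (q := q) (u := u) (c ∘ ⇑(sw j h)) =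
      ((List.ofFn fun k : Fin n => eL (n := n) q u k (c k)).take j).prod *
        (EE q u ⟨j, hn1⟩ (c ⟨j + 1, h⟩) (c ⟨j, hjn⟩) *
          ((List.ofFn fun k : Fin n => eL (n := n) q u k (c k)).drop (j + 2)).prod) := by
    have hd := L_decomp (q := q) (u := u) (c ∘ ⇑(sw j h)) j h
    rw [htake, hdrop, hswlo, hswhi] at hd
    exact hd
  have hTpre : Commute (Tg (n := n) (r := r) (q := q) (u := u) ⟨j, hn1⟩)
      ((List.ofFn fun k : Fin n => eL (n := n) q u k (c k)).take j).prod := by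
    apply Commute.list_prod_right
    intro x hx
    rw [List.mem_iff_getElem] at hx
    obtain ⟨m, hm, rfl⟩ := hx
    have hmj : m < j ∧ m < n := by
      simp only [List.length_take, List.length_ofFn] at hm
      omega
    simp only [List.getElem_take, List.getElem_ofFn]
    exact Tg_e_comm ⟨j, hn1⟩ ⟨m, hmj.2⟩ (by show m ≠ j; omega)
      (by show m ≠ j + 1; omega) _
  have hTpost : Commute (Tg (n := n) (r := r) (q := q) (u := u) ⟨j, hn1⟩)
      ((List.ofFn fun k : Fin n => eL (n := n) q u k (c k)).drop (j + 2)).prod := by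
    apply Commute.list_prod_right
    intro x hx
    rw [List.mem_iff_getElem] at hx
    obtain ⟨m, hm, rfl⟩ := hx
    have hmn : j + 2 + m < n := by
      simp only [List.length_drop, List.length_ofFn] at hm
      omega
    simp only [List.getElem_drop, List.getElem_ofFn]
    exact Tg_e_comm ⟨j, hn1⟩ ⟨j + 2 + m, hmn⟩ (by show j + 2 + m ≠ j; omega)
      (by show j + 2 + m ≠ j + 1; omega) _
  have key := TEfinal (n := n) (r := r) (q := q) (u := u) hu ⟨j, hn1⟩ (c ⟨j, hjn⟩) (c ⟨j + 1, h⟩)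
  have main : TgPos (n := n) (r := r) (q := q) (u := u) j h * L c =
      L (c ∘ ⇑(sw j h)) * TgPos j h +
        (if c ⟨j, hjn⟩ < c ⟨j + 1, h⟩ then (q - 1) • L c else 0) -
        (if c ⟨j + 1, h⟩ < c ⟨j, hjn⟩ then (q - 1) • L (c ∘ ⇑(sw j h)) else 0) := by
    rw [hLc, hLc']
    simp only [TgPos]
    rw [← mul_assoc, hTpre.eq, mul_assoc,
      ← mul_assoc (Tg (n := n) (r := r) (q := q) (u := u) ⟨j, hn1⟩), key]
    simp only [sub_mul, add_mul, ite_mul, zero_mul, smul_mul_assoc, mul_sub, mul_add,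
      mul_ite, mul_zero, mul_smul_comm, mul_assoc, hTpost.eq]
  refine ⟨fun hlt => ?_, fun heq => ?_, fun hgt => ?_⟩
  · rw [main, if_pos hlt, if_neg (lt_asymm hlt), sub_zero]
  · rw [main, if_neg (by rw [heq]; exact lt_irrefl _), if_neg (by rw [heq]; exact lt_irrefl _),
      add_zero, sub_zero, hLc, hLc', heq]
  · rw [main, if_neg (lt_asymm hgt), if_pos hgt, add_zero]


end

end AKSPaper
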